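/- arXiv:2512.11891 — 2 statements merged into one kernel-verified Lean document; each statement's English description precedes it below -/
import Mathlib

section
/- Let α : ℝ → ℝ be locally Lipschitz, strictly monotone increasing, and satisfy α(0) = 0. Let t₀ ∈ ℝ and let f : ℝ → ℝ be differentiable on [t₀, ∞) with f'(t) ≥ −α(f(t)) for every t ≥ t₀. If f(t₀) ≥ 0, then f(t) ≥ 0 for every t ≥ t₀. -/
/-- Forward invariance of the safe set under a general
extended class-K∞ comparison function: if `α` is locally Lipschitz, strictly
increasing with `α 0 = 0`, and `f` is differentiable on `[t₀, ∞)` with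
`f' t ≥ -α (f t)` there, then `f t₀ ≥ 0` implies `f t ≥ 0` for all `t ≥ t₀`. -/
theorem stmt1 (α : ℝ → ℝ) (hlip : LocallyLipschitz α) (hmono : StrictMono α)
    (hα0 : α 0 = 0) (t₀ : ℝ) (f f' : ℝ → ℝ)
    (hderiv : ∀ t ∈ Set.Ici t₀, HasDerivWithinAt f (f' t) (Set.Ici t₀) t)
    (hineq : ∀ t ∈ Set.Ici t₀, f' t ≥ -α (f t))
    (h0 : f t₀ ≥ 0) :
    ∀ t ∈ Set.Ici t₀, f t ≥ 0 := by
  intro t₁ ht₁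
  by_contra hneg
  push_neg at hneg
  have hcont : ContinuousOn f (Set.Ici t₀) := fun t ht =>
    (hderiv t ht).continuousWithinAt
  have hsub : Set.Icc t₀ t₁ ⊆ Set.Ici t₀ := Set.Icc_subset_Ici_self
  -- the set of points in [t₀, t₁] where f is nonnegative
  set S : Set ℝ := {t | t ∈ Set.Icc t₀ t₁ ∧ 0 ≤ f t} with hS
  have hne : S.Nonempty := ⟨t₀, ⟨le_refl _, ht₁⟩, h0⟩
  have hbdd : BddAbove S := ⟨t₁, fun x hx => hx.1.2⟩
  have hSclosed : IsClosed S := by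
    have : S = Set.Icc t₀ t₁ ∩ f ⁻¹' Set.Ici 0 := by
      ext x; simp [hS, Set.mem_Icc, and_assoc]
    rw [this]
    exact ContinuousOn.preimage_isClosed_of_isClosed (hcont.mono hsub)
      isClosed_Icc isClosed_Ici
  set s := sSup S with hs
  have hsmem : s ∈ S := hSclosed.csSup_mem hne hbdd
  have hfs : 0 ≤ f s := hsmem.2
  have hst₀ : t₀ ≤ s := hsmem.1.1
  have hst₁ : s ≤ t₁ := hsmem.1.2
  have hslt : s < t₁ := lt_of_le_of_ne hst₁ (by
    intro h; rw [h] at hfs; linarith)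
  -- on (s, t₁], f is negative
  have hfneg : ∀ t, s < t → t ≤ t₁ → f t < 0 := by
    intro t hst ht
    by_contra h
    push_neg at h
    have : t ∈ S := ⟨⟨hst₀.trans hst.le, ht⟩, h⟩
    exact absurd (le_csSup hbdd this) (not_le.mpr hst)
  -- f is strictly monotone on [s, t₁]
  have hsm : StrictMonoOn f (Set.Icc s t₁) := by
    apply strictMonoOn_of_deriv_pos (convex_Icc s t₁)
      (hcont.mono (Set.Icc_subset_Ici_self.trans (Set.Ici_subset_Ici.mpr hst₀)))
    intro t ht
    rw [interior_Icc] at ht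
    have ht₀' : t₀ < t := lt_of_le_of_lt hst₀ ht.1
    have hmem : t ∈ Set.Ici t₀ := le_of_lt ht₀'
    have hda : HasDerivAt f (f' t) t :=
      (hderiv t hmem).hasDerivAt (Ici_mem_nhds ht₀')
    rw [hda.deriv]
    have hft : f t < 0 := hfneg t ht.1 ht.2.le
    have : α (f t) < α 0 := hmono hft
    rw [hα0] at this
    have := hineq t hmem
    linarith
  have := hsm (Set.left_mem_Icc.mpr hslt.le) (Set.right_mem_Icc.mpr hslt.le) hslt
  linarith
end

section
/- Let A, B ∈ ℝ^{d×d} be symmetric positive definite, let c, o ∈ ℝ^d, let p_s ∈ ℝ^d be a unit vector, and set n := A⁻¹·p_s. Then the infimum over y ∈ E(B,o) of the signed distance (⟪n, y − c⟫ − 1)/‖n‖ from y to the hyperplane T := {q : ⟪n, q − c⟫ = 1} equals h(A,c,B,o,p_s) = (−‖B·n‖ + ⟪o − c, n⟫ − 1)/‖n‖, and this infimum is attained. -/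
open scoped RealInnerProductSpace

/-- The linear action of a matrix `A` on `EuclideanSpace ℝ (Fin d)`. -/
noncomputable def mv {d : ℕ} (A : Matrix (Fin d) (Fin d) ℝ)
    (x : EuclideanSpace ℝ (Fin d)) : EuclideanSpace ℝ (Fin d) :=
  (WithLp.equiv 2 (Fin d → ℝ)).symm (A.mulVec ((WithLp.equiv 2 (Fin d → ℝ)) x))

/-- The ellipsoid `E(A, c) = {c + A·s : ‖s‖ ≤ 1}`. -/
noncomputable def ellipsoid {d : ℕ} (A : Matrix (Fin d) (Fin d) ℝ)
    (c : EuclideanSpace ℝ (Fin d)) : Set (EuclideanSpace ℝ (Fin d)) :=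
  {y | ∃ s : EuclideanSpace ℝ (Fin d), ‖s‖ ≤ 1 ∧ y = c + mv A s}

/-- The barrier value `h(A,c,B,o,p_s) = (−‖B·n‖ + ⟪o − c, n⟫ − 1)/‖n‖` with
`n = A⁻¹·p_s` (Eq. (9) of the paper). -/
noncomputable def barrier {d : ℕ} (A : Matrix (Fin d) (Fin d) ℝ)
    (c : EuclideanSpace ℝ (Fin d)) (B : Matrix (Fin d) (Fin d) ℝ)
    (o : EuclideanSpace ℝ (Fin d)) (ps : EuclideanSpace ℝ (Fin d)) : ℝ :=
  (-‖mv B (mv A⁻¹ ps)‖ + ⟪o - c, mv A⁻¹ ps⟫ - 1) / ‖mv A⁻¹ ps‖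

open Matrix in
lemma inner_mv {d : ℕ} (M : Matrix (Fin d) (Fin d) ℝ) (hM : Mᵀ = M)
    (x y : EuclideanSpace ℝ (Fin d)) : ⟪x, mv M y⟫ = ⟪mv M x, y⟫ := by
  simp only [mv, EuclideanSpace.inner_eq_star_dotProduct, Equiv.apply_symm_apply,
    star_trivial, WithLp.equiv_symm_apply, WithLp.equiv_apply, WithLp.ofLp_toLp]
  rw [Matrix.dotProduct_mulVec, ← Matrix.mulVec_transpose, hM]

lemma mv_smul {d : ℕ} (M : Matrix (Fin d) (Fin d) ℝ) (r : ℝ)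
    (x : EuclideanSpace ℝ (Fin d)) : mv M (r • x) = r • mv M x := by
  simp only [mv]
  rw [WithLp.equiv_apply, WithLp.ofLp_smul, Matrix.mulVec_smul, WithLp.equiv_symm_apply, WithLp.toLp_smul, WithLp.equiv_apply]

lemma inner_mv_pos {d : ℕ} {M : Matrix (Fin d) (Fin d) ℝ} (hM : M.PosDef)
    {x : EuclideanSpace ℝ (Fin d)} (hx : x ≠ 0) : 0 < ⟪x, mv M x⟫ := by
  have hx' : (WithLp.equiv 2 (Fin d → ℝ)) x ≠ 0 := by
    simpa using hx
  simpa [mv, EuclideanSpace.inner_eq_star_dotProduct, dotProduct_comm] using hM.dotProduct_mulVec_pos hx'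

/-- With `n = A⁻¹·p_s`, the infimum over `y ∈ E(B,o)` of the
signed distance `(⟪n, y − c⟫ − 1)/‖n‖` from `y` to the hyperplane
`T = {q : ⟪n, q − c⟫ = 1}` is exactly the barrier value
`h(A,c,B,o,p_s) = (−‖B·n‖ + ⟪o − c, n⟫ − 1)/‖n‖`, and it is attained. -/
theorem stmt4 {d : ℕ} (A B : Matrix (Fin d) (Fin d) ℝ)
    (hA : A.PosDef) (hB : B.PosDef)
    (c o ps : EuclideanSpace ℝ (Fin d)) (hps : ‖ps‖ = 1) :
    IsLeast ((fun y => (⟪mv A⁻¹ ps, y - c⟫ - 1) / ‖mv A⁻¹ ps‖) '' ellipsoid B o)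
      (barrier A c B o ps) := by
  set n : EuclideanSpace ℝ (Fin d) := mv A⁻¹ ps with hn
  have hps0 : ps ≠ 0 := by
    intro h; rw [h, norm_zero] at hps; exact one_ne_zero hps.symm
  have hn0 : n ≠ 0 := by
    intro h
    have := inner_mv_pos hA.inv hps0
    rw [← hn, h, inner_zero_right] at this
    exact lt_irrefl 0 this
  have hnn : (0:ℝ) < ‖n‖ := norm_pos_iff.2 hn0
  set m : EuclideanSpace ℝ (Fin d) := mv B n with hm
  have hm0 : m ≠ 0 := by
    intro h
    have := inner_mv_pos hB hn0
    rw [← hm, h, inner_zero_right] at this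
    exact lt_irrefl 0 this
  have hmm : (0:ℝ) < ‖m‖ := norm_pos_iff.2 hm0
  have hBsymm : B.transpose = B := by
    have := hB.isHermitian
    rwa [Matrix.IsHermitian, Matrix.conjTranspose_eq_transpose_of_trivial] at this
  -- key expansion: for any s, ⟪n, (o + mv B s) - c⟫ = ⟪n, o - c⟫ + ⟪m, s⟫
  have key : ∀ s : EuclideanSpace ℝ (Fin d),
      ⟪n, (o + mv B s) - c⟫ = ⟪n, o - c⟫ + ⟪m, s⟫ := by
    intro s
    have h1 : (o + mv B s) - c = (o - c) + mv B s := by abel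
    rw [h1, inner_add_right, inner_mv B hBsymm n s]
  constructor
  · -- attained at s₀ = -(‖m‖⁻¹) • m
    refine ⟨o + mv B ((-‖m‖⁻¹) • m), ⟨(-‖m‖⁻¹) • m, ?_, rfl⟩, ?_⟩
    · rw [norm_smul]
      simp [abs_of_pos (inv_pos.2 hmm), inv_mul_cancel₀ hmm.ne']
    · have hv : ⟪m, (-‖m‖⁻¹ : ℝ) • m⟫ = -‖m‖ := by
        rw [real_inner_smul_right, real_inner_self_eq_norm_sq]
        field_simp
      show (⟪n, (o + mv B ((-‖m‖⁻¹:ℝ) • m)) - c⟫ - 1) / ‖n‖ = _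
      rw [key, hv]
      unfold barrier
      rw [← hn, ← hm, real_inner_comm (o - c) n]
      ring_nf
  · rintro x ⟨y, ⟨s, hs, rfl⟩, rfl⟩
    simp only
    rw [key]
    have hlow : -‖m‖ ≤ ⟪m, s⟫ := by
      have h1 : |⟪m, s⟫| ≤ ‖m‖ * ‖s‖ := abs_real_inner_le_norm m s
      have h2 : ‖m‖ * ‖s‖ ≤ ‖m‖ := by
        nlinarith
      nlinarith [neg_abs_le (⟪m, s⟫ : ℝ)]
    unfold barrier
    rw [← hn, ← hm, real_inner_comm (o - c) n]
    gcongr (?_ / _)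
    linarith
end
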